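/- (Lemma 9, generating function.) Suppose in addition 0 < q < 1. For every integer h ≥ 1, every real number x and every real number t, both series below converge absolutely and (1+q) · Σ_{n=0}^{∞} (−1)^n q^{hn} exp([n+x]_q · t) = Σ_{n=0}^{∞} E_{n,q}^{(h,1)}(x) · t^n / n!. -/

import Mathlib

open Finset

/-- The q-number `[x]_q = (1 - q^x)/(1 - q)`, with `q^x = exp (x * log q)` (rpow). -/
noncomputable def qNum (q x : ℝ) : ℝ := (1 - q ^ x) / (1 - q)

/-- `[l]_{-q} = (1 - (-q)^l)/(1 + q)` for a natural number `l`. -/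
noncomputable def qNumNeg (q : ℝ) (l : ℕ) : ℝ := (1 - (-q) ^ l) / (1 + q)

/-- The higher-order q-Euler polynomial
`E_{m,q}^{(h,k)}(x) = ((1+q)^k/(1-q)^m) * Σ_{j=0}^m C(m,j) (-1)^j q^{jx} / Π_{i=0}^{k-1} (1 + q^{h+j-i})`. -/
noncomputable def qE (q : ℝ) (h : ℤ) (k m : ℕ) (x : ℝ) : ℝ :=
  ((1 + q) ^ k / (1 - q) ^ m) *
    ∑ j ∈ Finset.range (m + 1),
      (m.choose j : ℝ) * (-1) ^ j * q ^ ((j : ℝ) * x) /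
        ∏ i ∈ Finset.range k, (1 + q ^ ((h : ℝ) + (j : ℝ) - (i : ℝ)))

section aux

variable {q : ℝ} (hq0 : 0 < q) (hq1 : q < 1) {h : ℤ} (hh : 1 ≤ h) (x t : ℝ)

/-- The summand family. -/
noncomputable def F (q : ℝ) (h : ℤ) (x t : ℝ) (n m : ℕ) : ℝ :=
  (-1) ^ n * q ^ (h * (n : ℤ)) * (qNum q ((n : ℝ) + x) * t) ^ m / (m.factorial : ℝ)

include hq0 hq1 in
lemma qNum_abs_le (n : ℕ) :
    |qNum q ((n : ℝ) + x)| ≤ max 1 (q ^ x) / (1 - q) := by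
  have h1q : (0:ℝ) < 1 - q := by linarith
  rw [qNum, abs_div, abs_of_pos h1q]
  apply div_le_div_of_nonneg_right ?_ h1q.le
  rw [abs_le]
  constructor
  · have : q ^ ((n : ℝ) + x) ≤ q ^ x :=
      Real.rpow_le_rpow_of_exponent_ge hq0 hq1.le (by simp [Nat.cast_nonneg])
    have h2 : q ^ x ≤ max 1 (q ^ x) := le_max_right _ _
    nlinarith
  · have : (0:ℝ) < q ^ ((n : ℝ) + x) := Real.rpow_pos_of_pos hq0 _
    have h2 : (1:ℝ) ≤ max 1 (q ^ x) := le_max_left _ _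
    nlinarith

include hq0 hq1 hh in
lemma qh_mem : 0 < q ^ h ∧ q ^ h < 1 := by
  exact ⟨zpow_pos hq0 h, zpow_lt_one₀ hq0 hq1 (by omega)⟩

include hq0 in
lemma abs_F (n m : ℕ) :
    |F q h x t n m| = q ^ (h * (n : ℤ)) * (|qNum q ((n : ℝ) + x) * t| ^ m / (m.factorial : ℝ)) := by
  have := zpow_pos hq0 (h * (n : ℤ))
  rw [F, abs_div, abs_mul, abs_mul, abs_pow, abs_neg, abs_one, one_pow, one_mul,
    abs_of_pos this, Nat.abs_cast, abs_pow]
  ring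

include hq0 in
lemma row_summable_abs (n : ℕ) : Summable fun m => |F q h x t n m| := by
  have := (Real.summable_pow_div_factorial |qNum q ((n : ℝ) + x) * t|).mul_left
    (q ^ (h * (n : ℤ)))
  exact this.congr fun m => (abs_F hq0 x t n m).symm

include hq0 in
lemma row_tsum_abs (n : ℕ) :
    ∑' m, |F q h x t n m| = q ^ (h * (n : ℤ)) * Real.exp |qNum q ((n : ℝ) + x) * t| := by
  have : ∀ m : ℕ, |F q h x t n m| = q ^ (h * (n : ℤ)) *
      (|qNum q ((n : ℝ) + x) * t| ^ m / (m.factorial : ℝ)) := abs_F hq0 x t n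
  rw [tsum_congr this, tsum_mul_left]
  congr 1
  rw [Real.exp_eq_exp_ℝ, NormedSpace.exp_eq_tsum_div]

lemma row_tsum (n : ℕ) :
    ∑' m, F q h x t n m =
      (-1) ^ n * q ^ (h * (n : ℤ)) * Real.exp (qNum q ((n : ℝ) + x) * t) := by
  have : ∀ m : ℕ, F q h x t n m = ((-1) ^ n * q ^ (h * (n : ℤ))) *
      ((qNum q ((n : ℝ) + x) * t) ^ m / (m.factorial : ℝ)) := by
    intro m; rw [F]; ring
  rw [tsum_congr this, tsum_mul_left]
  rw [Real.exp_eq_exp_ℝ, NormedSpace.exp_eq_tsum_div]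

include hq0 hq1 hh in
lemma prod_summable_abs : Summable fun p : ℕ × ℕ => |F q h x t p.1 p.2| := by
  set C := max 1 (q ^ x) / (1 - q) with hC
  have hC0 : 0 ≤ C := le_trans (abs_nonneg _) (qNum_abs_le hq0 hq1 x 0)
  have hnn : (0 : ℕ × ℕ → ℝ) ≤ fun p : ℕ × ℕ => |F q h x t p.1 p.2| :=
    fun p => abs_nonneg _
  rw [summable_prod_of_nonneg hnn]
  refine ⟨fun n => row_summable_abs hq0 x t n, ?_⟩
  have hgeo : Summable fun n : ℕ => (q ^ h) ^ n * Real.exp (C * |t|) :=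
    (summable_geometric_of_lt_one (qh_mem hq0 hq1 hh).1.le (qh_mem hq0 hq1 hh).2).mul_right _
  refine Summable.of_nonneg_of_le (fun n => tsum_nonneg fun m => abs_nonneg _) (fun n => ?_) hgeo
  rw [row_tsum_abs hq0 x t n, zpow_mul, zpow_natCast]
  have h1 : Real.exp |qNum q ((n:ℝ)+x) * t| ≤ Real.exp (C * |t|) := by
    rw [Real.exp_le_exp, abs_mul]
    exact mul_le_mul_of_nonneg_right (qNum_abs_le hq0 hq1 x n) (abs_nonneg t)
  exact mul_le_mul_of_nonneg_left h1 (pow_nonneg (qh_mem hq0 hq1 hh).1.le n)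

include hq0 hq1 in
lemma F_eq_sum (n m : ℕ) :
    F q h x t n m = ∑ j ∈ Finset.range (m + 1),
      ((m.choose j : ℝ) * (-1) ^ j * q ^ ((j : ℝ) * x) * t ^ m /
          ((1 - q) ^ m * (m.factorial : ℝ))) * (-(q ^ ((h : ℝ) + (j : ℝ)))) ^ n := by
  have hy : ∀ j : ℕ, (q ^ ((n : ℝ) + x)) ^ j = q ^ (((n : ℝ) + x) * (j : ℝ)) := fun j => by
    rw [← Real.rpow_natCast (q ^ ((n : ℝ) + x)) j, ← Real.rpow_mul hq0.le]
  have hb : (1 - q ^ ((n : ℝ) + x)) ^ m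
      = ∑ j ∈ Finset.range (m + 1), (-1) ^ j * q ^ (((n : ℝ) + x) * (j : ℝ)) * (m.choose j : ℝ) := by
    rw [show (1 : ℝ) - q ^ ((n : ℝ) + x) = -(q ^ ((n : ℝ) + x)) + 1 by ring, add_pow]
    exact Finset.sum_congr rfl fun j _ => by rw [one_pow, neg_pow, hy]; ring
  have key : F q h x t n m
      = (∑ j ∈ Finset.range (m + 1), (-1) ^ j * q ^ (((n : ℝ) + x) * (j : ℝ)) * (m.choose j : ℝ))
        * ((-1) ^ n * q ^ (h * (n : ℤ)) * t ^ m / ((1 - q) ^ m * (m.factorial : ℝ))) := by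
    rw [F, qNum, ← hb, div_mul_eq_mul_div, div_pow, mul_pow]
    ring
  rw [key, Finset.sum_mul]
  refine Finset.sum_congr rfl fun j _ => ?_
  have e2 : (-(q ^ ((h : ℝ) + (j : ℝ)))) ^ n = (-1 : ℝ) ^ n * q ^ (((h : ℝ) + (j : ℝ)) * (n : ℝ)) := by
    rw [neg_pow, ← Real.rpow_natCast (q ^ ((h : ℝ) + (j : ℝ))) n, ← Real.rpow_mul hq0.le]
  have e3 : q ^ (h * (n : ℤ)) = q ^ ((h : ℝ) * (n : ℝ)) := by
    rw [← Real.rpow_intCast q (h * (n : ℤ))]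
    norm_num
  have e4 : q ^ (((n : ℝ) + x) * (j : ℝ)) * q ^ ((h : ℝ) * (n : ℝ))
      = q ^ ((j : ℝ) * x) * q ^ (((h : ℝ) + (j : ℝ)) * (n : ℝ)) := by
    rw [← Real.rpow_add hq0, ← Real.rpow_add hq0]
    ring_nf
  rw [e2, e3]
  have hm : ((1 : ℝ) - q) ^ m * (m.factorial : ℝ) ≠ 0 := by
    have : (0:ℝ) < 1 - q := by linarith
    positivity
  linear_combination ((-1 : ℝ) ^ j * (m.choose j : ℝ) * (-1) ^ n * t ^ m /
    ((1 - q) ^ m * (m.factorial : ℝ))) * e4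

include hq0 hq1 hh in
lemma geo_abs (j : ℕ) : |(-(q ^ ((h : ℝ) + (j : ℝ))))| < 1 := by
  rw [abs_neg, abs_of_pos (Real.rpow_pos_of_pos hq0 _)]
  refine Real.rpow_lt_one hq0.le hq1 ?_
  have : (1 : ℝ) ≤ (h : ℝ) := by exact_mod_cast hh
  have : (0 : ℝ) ≤ (j : ℝ) := Nat.cast_nonneg j
  linarith

include hq0 hq1 hh in
lemma col_tsum (m : ℕ) :
    ∑' n, F q h x t n m = ∑ j ∈ Finset.range (m + 1),
      ((m.choose j : ℝ) * (-1) ^ j * q ^ ((j : ℝ) * x) * t ^ m /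
          ((1 - q) ^ m * (m.factorial : ℝ))) * (1 + q ^ ((h : ℝ) + (j : ℝ)))⁻¹ := by
  rw [tsum_congr (fun n => F_eq_sum hq0 hq1 x t n m)]
  rw [Summable.tsum_finsetSum (fun j _ => (summable_geometric_of_abs_lt_one
    (geo_abs hq0 hq1 hh j)).mul_left _)]
  refine Finset.sum_congr rfl fun j _ => ?_
  rw [tsum_mul_left, tsum_geometric_of_abs_lt_one (geo_abs hq0 hq1 hh j), sub_neg_eq_add]

include hq0 hq1 hh in
lemma qE_eq (m : ℕ) :
    qE q h 1 m x * t ^ m / (m.factorial : ℝ) = (1 + q) * ∑' n, F q h x t n m := by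
  have hqE : qE q h 1 m x = ((1 + q) / (1 - q) ^ m) *
      ∑ j ∈ Finset.range (m + 1),
        (m.choose j : ℝ) * (-1) ^ j * q ^ ((j : ℝ) * x) / (1 + q ^ ((h : ℝ) + (j : ℝ))) := by
    rw [qE, pow_one]
    refine congrArg _ (Finset.sum_congr rfl fun j _ => ?_)
    rw [Finset.prod_range_one]
    norm_num
  rw [hqE, col_tsum hq0 hq1 hh x t m, Finset.mul_sum, Finset.sum_mul, Finset.sum_div,
    Finset.mul_sum]
  refine Finset.sum_congr rfl fun j _ => ?_
  have h1q : (0:ℝ) < 1 - q := by linarith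
  have hd : (0:ℝ) < 1 + q ^ ((h : ℝ) + (j : ℝ)) := by positivity
  have hm : (0:ℝ) < (m.factorial : ℝ) := by exact_mod_cast m.factorial_pos
  field_simp

end aux

theorem stmt_18 (q : ℝ) (hq0 : 0 < q) (hq1 : q < 1) (h : ℤ) (hh : 1 ≤ h) (x t : ℝ) :
    Summable (fun n : ℕ =>
        |(-1 : ℝ) ^ n * q ^ (h * (n : ℤ)) * Real.exp (qNum q ((n : ℝ) + x) * t)|) ∧
      Summable (fun n : ℕ => |qE q h 1 n x * t ^ n / (n.factorial : ℝ)|) ∧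
      (1 + q) * ∑' n : ℕ, (-1 : ℝ) ^ n * q ^ (h * (n : ℤ)) *
            Real.exp (qNum q ((n : ℝ) + x) * t)
        = ∑' n : ℕ, qE q h 1 n x * t ^ n / (n.factorial : ℝ) := by
  have hFsum := prod_summable_abs hq0 hq1 hh x t
  have hFsum' : Summable (Function.uncurry (F q h x t)) := Summable.of_abs hFsum
  have hrowsum : Summable fun n : ℕ => ∑' m, |F q h x t n m| := hFsum.prod
  have hcolabs : ∀ m, Summable fun n => |F q h x t n m| :=
    fun m => hFsum.prod_symm.prod_factor m
  have hcolsum : Summable fun m : ℕ => ∑' n, |F q h x t n m| := hFsum.prod_symm.prod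
  refine ⟨?_, ?_, ?_⟩
  · refine Summable.of_nonneg_of_le (fun n => abs_nonneg _) (fun n => ?_) hrowsum
    rw [row_tsum_abs hq0 x t n]
    have h2 : (0:ℝ) < q ^ (h * (n:ℤ)) := zpow_pos hq0 _
    rw [abs_mul, abs_mul, abs_pow, abs_neg, abs_one, one_pow, one_mul, abs_of_pos h2,
      Real.abs_exp]
    exact mul_le_mul_of_nonneg_left (Real.exp_le_exp.mpr (le_abs_self _)) h2.le
  · refine Summable.of_nonneg_of_le (fun m => abs_nonneg _)
      (fun m => ?_) (hcolsum.mul_left (1+q))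
    rw [qE_eq hq0 hq1 hh x t m, abs_mul, abs_of_pos (by linarith : (0:ℝ) < 1+q)]
    refine mul_le_mul_of_nonneg_left ?_ (by linarith)
    have := norm_tsum_le_tsum_norm (f := fun n => F q h x t n m)
      (by simpa [Real.norm_eq_abs] using hcolabs m)
    simpa [Real.norm_eq_abs] using this
  · have e1 : ∀ n : ℕ, (-1:ℝ)^n * q ^ (h * (n:ℤ)) * Real.exp (qNum q ((n:ℝ)+x) * t)
        = ∑' m, F q h x t n m := fun n => (row_tsum x t n).symm
    rw [tsum_congr e1, ← Summable.tsum_comm hFsum', ← tsum_mul_left]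
    exact tsum_congr fun m => (qE_eq hq0 hq1 hh x t m).symm
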